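/- arXiv:2507.09187 — 2 statements merged into one kernel-verified Lean document; each statement's English description precedes it below -/
import Mathlib

section
/- The dynamic description of stack-sorting agrees with the recursive one: for any permutation π of [n], applying the relocation operations S_{b_1}, …, S_{b_k} in increasing order of the descent tops b_1 < ⋯ < b_k of π yields S(π), where each S_{b} moves the letter b to immediately before the first letter to its right that is larger than b (or to the end if no such letter exists). -/
open scoped Classical
noncomputable section

/-- Stack-sorting `S` implemented with fuel: `S(L n R) = S(L) S(R) n`. -/
def ssFuel : ℕ → List ℕ → List ℕ
  | 0, _ => []
  | _ + 1, [] => []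
  | f + 1, x :: xs =>
    let l := x :: xs
    let m := l.foldr max 0
    let i := l.idxOf m
    ssFuel f (l.take i) ++ ssFuel f (l.drop (i + 1)) ++ [m]

def stackSort (l : List ℕ) : List ℕ := ssFuel l.length l

/-- One-line word (with letters `1,…,n`) of a permutation of `Fin n`. -/
def word {n : ℕ} (π : Equiv.Perm (Fin n)) : List ℕ := List.ofFn fun i => (π i : ℕ) + 1

/-- The identity word `1 2 ⋯ n`. -/
def sortedWord (n : ℕ) : List ℕ := List.ofFn fun i : Fin n => (i : ℕ) + 1

/-- `π` is `t`-stack-sortable. -/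
def StackSortable (t : ℕ) {n : ℕ} (π : Equiv.Perm (Fin n)) : Prop :=
  stackSort^[t] (word π) = sortedWord n

/-- `π` avoids the pattern `p`. -/
def Avoids {n k : ℕ} (π : Equiv.Perm (Fin n)) (p : Equiv.Perm (Fin k)) : Prop :=
  ¬ ∃ f : Fin k → Fin n, StrictMono f ∧ ∀ a b : Fin k, p a < p b ↔ π (f a) < π (f b)

def p321 : Equiv.Perm (Fin 3) := Fin.revPerm
def p213 : Equiv.Perm (Fin 3) := Equiv.swap 0 1
def p231 : Equiv.Perm (Fin 3) := finRotate 3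
def p132 : Equiv.Perm (Fin 3) := Equiv.swap 1 2

def mlw {n : ℕ} (π : Equiv.Perm (Fin n)) : ℕ :=
  (Finset.univ.filter fun j : Fin n => ∀ k, j < k → π j < π k).sup
    fun j => (j : ℕ) - (π j : ℕ)

def fixNum {n : ℕ} (π : Equiv.Perm (Fin n)) : ℕ :=
  (Finset.univ.filter fun i => π i = i).card

def dropNum {n : ℕ} (π : Equiv.Perm (Fin n)) : ℕ :=
  (Finset.univ.filter fun i => π i < i).card

def desNum {n : ℕ} (π : Equiv.Perm (Fin n)) : ℕ :=
  (Finset.univ.filter fun i : Fin n =>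
    ∃ h : (i : ℕ) + 1 < n, π ⟨(i : ℕ) + 1, h⟩ < π i).card

def badNum {n : ℕ} (π : Equiv.Perm (Fin n)) : ℕ :=
  (Finset.univ.filter fun i : Fin n =>
    (∀ j, i < j → π i < π j) ∧
      ((i : ℕ) = 0 ∨
        π ⟨(i : ℕ) - 1, lt_of_le_of_lt (Nat.sub_le _ _) i.isLt⟩ < π i)).card

def invNum {n : ℕ} (π : Equiv.Perm (Fin n)) : ℕ :=
  (Finset.univ.filter fun p : Fin n × Fin n => p.1 < p.2 ∧ π p.2 < π p.1).card

/-- Binary trees with natural-number labels. -/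
inductive BT : Type
  | leaf : BT
  | node : BT → ℕ → BT → BT
  deriving DecidableEq

/-- The increasing-binary-tree map `λ`, implemented with fuel. -/
def lamFuel : ℕ → List ℕ → BT
  | 0, _ => .leaf
  | f + 1, [] => .leaf
  | f + 1, x :: xs =>
    let l := x :: xs
    let m := xs.foldr min x
    let i := l.idxOf m
    .node (lamFuel f (l.take i)) m (lamFuel f (l.drop (i + 1)))

def lam (l : List ℕ) : BT := lamFuel l.length l

/-- In-order reading word of a binary tree. -/
def BT.labels : BT → List ℕ
  | .leaf => []
  | .node l x r => l.labels ++ x :: r.labels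

/-- Maximum number of right edges in a descending path starting at the root. -/
def rstart : BT → ℕ
  | .leaf => 0
  | .node l _ .leaf => rstart l
  | .node l _ r => max (rstart l) (1 + rstart r)

/-- Maximum number of right edges in any descending path of the tree. -/
def rany : BT → ℕ
  | .leaf => 0
  | .node l x r => max (rstart (.node l x r)) (max (rany l) (rany r))

def BT.isLeaf : BT → Bool
  | .leaf => true
  | _ => false

/-- Does the tree contain a left edge? -/
def hasLeft : BT → Bool
  | .leaf => false
  | .node l _ r => (!l.isLeaf) || hasLeft l || hasLeft r

/-- The right arm of a tree: the list of pairs (label, left subtree) along the maximal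
right path from the root. -/
def armSubs : BT → List (ℕ × BT)
  | .leaf => []
  | .node l x r => (x, l) :: armSubs r

/-- `lrrp`: one plus the maximal number of right edges in a restricted (right-arm-avoiding)
descending path; `0` if the tree has no left edge. -/
def lrrp (T : BT) : ℕ :=
  if hasLeft T then 1 + ((armSubs T).map fun p => rany p.2).foldr max 0 else 0

/-- A pure right chain: no node has a left child. -/
def isRightChain : BT → Prop
  | .leaf => True
  | .node l _ r => l = .leaf ∧ isRightChain r

/-- Increasing binary tree: each label is smaller than all labels in its subtrees. -/
def Increasing : BT → Prop
  | .leaf => True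
  | .node l x r =>
      (∀ y ∈ l.labels, x < y) ∧ (∀ y ∈ r.labels, x < y) ∧ Increasing l ∧ Increasing r

/-- `321`-avoiding tree: every right chain hangs off the right arm (equivalently, the
path from the root to any right leaf has exactly one left edge), and the right chains are
ordered consistently with their attaching nodes. -/
def Is321Tree (T : BT) : Prop :=
  (∀ p ∈ armSubs T, isRightChain p.2) ∧
    ∀ p ∈ armSubs T, ∀ q ∈ armSubs T, p.2 ≠ BT.leaf → q.2 ≠ BT.leaf →
      (p.1 < q.1 ↔ ∀ a ∈ p.2.labels, ∀ b ∈ q.2.labels, a < b)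

/-- Labels of nodes without right child. -/
def noRight : BT → List ℕ
  | .leaf => []
  | .node l x .leaf => noRight l ++ [x]
  | .node l x r => noRight l ++ noRight r

/-- Labels of the right leaves: nodes without right child not on the right arm. -/
def rightLeafLabels (T : BT) : List ℕ :=
  ((armSubs T).map fun p => noRight p.2).flatten

/-- `a` is the value of a right-to-left minimum of the word `w`. -/
def IsRLMinVal (w : List ℕ) (a : ℕ) : Prop :=
  ∃ j, j < w.length ∧ w.getD j 0 = a ∧ ∀ k, j < k → k < w.length → a < w.getD k 0

/-- Insert `b` immediately before the first letter exceeding `b` (or at the end). -/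
def insBefore (b : ℕ) : List ℕ → List ℕ
  | [] => [b]
  | x :: xs => if b < x then b :: x :: xs else x :: insBefore b xs

/-- The relocation `S_b`: delete `b` and reinsert it immediately before the leftmost
letter to the right of its position that exceeds `b`, or at the end. -/
def reloc (b : ℕ) (w : List ℕ) : List ℕ :=
  w.take (w.idxOf b) ++ insBefore b (w.drop (w.idxOf b + 1))

/-- The descent tops of `w`, listed in increasing order. -/
def dtopList (w : List ℕ) : List ℕ :=
  (((List.range (w.length - 1)).filter fun i => w.getD (i + 1) 0 < w.getD i 0).map
      fun i => w.getD i 0).mergeSort fun a b => decide (a ≤ b)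

def dtopsAux : List ℕ → List ℕ
  | [] => []
  | [_] => []
  | a :: b :: t => (if b < a then [a] else []) ++ dtopsAux (b :: t)

lemma dtopsAux_sublist : ∀ l : List ℕ, List.Sublist (dtopsAux l) l
  | [] => by simp [dtopsAux]
  | [a] => by simp [dtopsAux]
  | a :: b :: t => by
    rw [dtopsAux]
    rcases Nat.lt_or_ge b a with h | h
    · simpa [h] using (dtopsAux_sublist (b :: t)).cons₂ a
    · simpa [Nat.not_lt.2 h] using (dtopsAux_sublist (b :: t)).cons a

lemma insBefore_append (b x : ℕ) (hx : b < x) :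
    ∀ xs ys : List ℕ, insBefore b (xs ++ x :: ys) = insBefore b xs ++ x :: ys
  | [], ys => by simp [insBefore, hx]
  | z :: xs, ys => by
    by_cases h : b < z <;> simp [insBefore, h, insBefore_append b x hx xs ys]

lemma insBefore_all_lt (b : ℕ) : ∀ xs : List ℕ, (∀ y ∈ xs, y < b) →
    insBefore b xs = xs ++ [b]
  | [], _ => rfl
  | x :: xs, h => by
    have : ¬ b < x := Nat.not_lt.2 (le_of_lt (h x (by simp)))
    simp [insBefore, this, insBefore_all_lt b xs (fun y hy => h y (by simp [hy]))]

lemma insBefore_perm (b : ℕ) : ∀ xs : List ℕ, (insBefore b xs).Perm (b :: xs)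
  | [] => by simp [insBefore]
  | x :: xs => by
    by_cases h : b < x
    · simp [insBefore, h]
    · simp only [insBefore, h, if_false]
      exact ((insBefore_perm b xs).cons x).trans (List.Perm.swap b x xs)

lemma take_indexOf_cons_drop (l : List ℕ) (b : ℕ) (hb : b ∈ l) :
    l.take (l.idxOf b) ++ b :: l.drop (l.idxOf b + 1) = l := by
  have h := List.idxOf_lt_length_iff.2 hb
  conv_rhs => rw [← List.take_append_drop (l.idxOf b) l]
  rw [List.drop_eq_getElem_cons h, List.getElem_idxOf h]

lemma reloc_perm (b : ℕ) (l : List ℕ) (hb : b ∈ l) : (reloc b l).Perm l := by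
  unfold reloc
  refine (List.Perm.append_left _ (insBefore_perm _ _)).trans ?_
  rw [take_indexOf_cons_drop l b hb]

lemma reloc_left (b m : ℕ) (A B : List ℕ) (hbA : b ∈ A) (hbm : b < m) :
    reloc b (A ++ m :: B) = reloc b A ++ m :: B := by
  unfold reloc
  have hidx : (A ++ m :: B).idxOf b = A.idxOf b := List.idxOf_append_of_mem hbA
  have hlt : A.idxOf b < A.length := List.idxOf_lt_length_iff.2 hbA
  rw [hidx, List.take_append, List.drop_append,
    Nat.sub_eq_zero_of_le (le_of_lt hlt), Nat.sub_eq_zero_of_le hlt]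
  simp only [List.take_zero, List.append_nil, List.drop_zero]
  rw [insBefore_append b m hbm, List.append_assoc]

lemma reloc_right (b m : ℕ) (A B : List ℕ) (hbA : b ∉ A) (hbm : b ≠ m) :
    reloc b (A ++ m :: B) = A ++ m :: reloc b B := by
  unfold reloc
  have h1 : (A ++ m :: B).idxOf b = A.length + (B.idxOf b + 1) := by
    rw [List.idxOf_append_of_notMem hbA, List.idxOf_cons]
    have : (m == b) = false := beq_false_of_ne (Ne.symm hbm)
    simp [this, Nat.add_comm]
  rw [h1, List.take_append, List.drop_append]
  have h2 : A.length ≤ A.length + (B.idxOf b + 1) := Nat.le_add_right _ _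
  rw [List.take_of_length_le h2, List.drop_of_length_le (h2.trans (Nat.le_succ _)),
    Nat.add_sub_cancel_left]
  have h3 : A.length + (B.idxOf b + 1) + 1 - A.length = B.idxOf b + 1 + 1 := by omega
  rw [h3]
  simp only [List.take_succ_cons, List.drop_succ_cons, List.nil_append]
  simp [List.append_assoc]

lemma reloc_max (m : ℕ) (A B : List ℕ) (hmA : m ∉ A) (hB : ∀ y ∈ B, y < m) :
    reloc m (A ++ m :: B) = A ++ B ++ [m] := by
  unfold reloc
  have h1 : (A ++ m :: B).idxOf m = A.length := by
    rw [List.idxOf_append_of_notMem hmA, List.idxOf_cons_self, Nat.add_zero]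
  rw [h1, List.take_append, List.drop_append]
  simp only [Nat.sub_self, List.take_zero, List.append_nil,
    List.take_of_length_le (le_refl A.length),
    List.drop_of_length_le (Nat.le_succ_of_le (le_refl A.length))]
  have h3 : A.length + 1 - A.length = 1 := by omega
  rw [h3]
  simp only [List.drop_succ_cons, List.drop_zero, List.nil_append]
  rw [insBefore_all_lt m B hB, List.append_assoc]

lemma pre_eq : ∀ w : List ℕ,
    (((List.range (w.length - 1)).filter fun i => w.getD (i + 1) 0 < w.getD i 0).map
      fun i => w.getD i 0) = dtopsAux w
  | [] => by simp [dtopsAux]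
  | [a] => by simp [dtopsAux]
  | a :: b :: t => by
    have ih := pre_eq (b :: t)
    rw [dtopsAux, ← ih]
    simp only [List.length_cons, Nat.add_sub_cancel, List.range_succ_eq_map,
      List.filter_cons, List.filter_map]
    have e1 : ((fun i => decide ((a :: b :: t).getD (i + 1) 0 < (a :: b :: t).getD i 0)) ∘ Nat.succ)
        = fun i => decide ((b :: t).getD (i + 1) 0 < (b :: t).getD i 0) := by
      funext i; rfl
    have e2 : ((fun i => (a :: b :: t).getD i 0) ∘ Nat.succ)
        = fun i => (b :: t).getD i 0 := by funext i; rfl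
    rw [e1]
    by_cases h : b < a <;>
      simp [h, e2, List.map_map, List.getD_cons_succ, List.getD_cons_zero]

lemma dtopsAux_split (m : ℕ) : ∀ (L R : List ℕ), (∀ x ∈ L, x < m) → (∀ x ∈ R, x < m) →
    dtopsAux (L ++ m :: R) = dtopsAux L ++ (if R.isEmpty then [] else [m]) ++ dtopsAux R
  | [], R, _, hR => by
    cases R with
    | nil => simp [dtopsAux]
    | cons r R' =>
      have : r < m := hR r (by simp)
      simp [dtopsAux, this]
  | [a], R, hL, hR => by
    have ha : a < m := hL a (by simp)
    have h0 := dtopsAux_split m [] R (by simp) hR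
    simp only [List.nil_append, dtopsAux] at h0
    rw [List.singleton_append,
      show dtopsAux (a :: m :: R) = (if m < a then [a] else []) ++ dtopsAux (m :: R) from rfl,
      if_neg (Nat.not_lt.2 (le_of_lt ha)), h0]
    simp [dtopsAux]
  | a :: b :: L', R, hL, hR => by
    have ih := dtopsAux_split m (b :: L') R (fun x hx => hL x (by simp [hx])) hR
    simp only [List.cons_append] at ih ⊢
    rw [show dtopsAux (a :: b :: (L' ++ m :: R)) =
        (if b < a then [a] else []) ++ dtopsAux (b :: (L' ++ m :: R)) from rfl, ih,
      show dtopsAux (a :: b :: L') = (if b < a then [a] else []) ++ dtopsAux (b :: L') from rfl]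
    simp [List.append_assoc]

-- recursive stack sort

lemma foldr_max_mem : ∀ (x : ℕ) (xs : List ℕ), (x :: xs).foldr max 0 ∈ x :: xs
  | x, [] => by simp
  | x, y :: ys => by
    rcases le_or_gt ((y :: ys).foldr max 0) x with h | h
    · simp only [List.foldr_cons] at h ⊢
      rw [Nat.max_eq_left h]
      simp
    · have := foldr_max_mem y ys
      simp only [List.foldr_cons] at *
      rw [Nat.max_eq_right (le_of_lt h)]
      exact List.mem_cons_of_mem _ this

lemma le_foldr_max (l : List ℕ) : ∀ y ∈ l, y ≤ l.foldr max 0 := by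
  induction l with
  | nil => simp
  | cons x xs ih =>
    intro y hy
    rcases List.mem_cons.1 hy with h | h
    · simp [h, le_max_iff]
    · exact le_max_of_le_right (ih y h)

def ss : List ℕ → List ℕ
  | [] => []
  | x :: xs =>
    let l := x :: xs
    let m := l.foldr max 0
    let i := l.idxOf m
    ss (l.take i) ++ ss (l.drop (i + 1)) ++ [m]
  termination_by l => l.length
  decreasing_by
  · simp only [List.length_take]
    have : List.idxOf ((x :: xs).foldr max 0) (x :: xs) < (x :: xs).length :=
      List.idxOf_lt_length_iff.2 (foldr_max_mem x xs)
    omega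
  · simp only [List.length_drop]
    simp only [List.length_cons]
    omega

lemma ssFuel_eq_ss : ∀ (f : ℕ) (l : List ℕ), l.length ≤ f → ssFuel f l = ss l := by
  intro f
  induction f with
  | zero => intro l hl; rw [List.length_eq_zero_iff.1 (Nat.le_zero.1 hl)]; simp [ssFuel, ss]
  | succ f ih =>
    intro l hl
    cases l with
    | nil => simp [ssFuel, ss]
    | cons x xs =>
      rw [ssFuel, ss]
      have hm : List.idxOf ((x :: xs).foldr max 0) (x :: xs) < (x :: xs).length :=
        List.idxOf_lt_length_iff.2 (foldr_max_mem x xs)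
      have h1 : ((x :: xs).take (List.idxOf ((x :: xs).foldr max 0) (x :: xs))).length ≤ f := by
        simp only [List.length_take]
        simp only [List.length_cons] at hm hl ⊢
        omega
      have h2 : ((x :: xs).drop (List.idxOf ((x :: xs).foldr max 0) (x :: xs) + 1)).length ≤ f := by
        simp only [List.length_drop]
        simp only [List.length_cons] at hm hl ⊢
        omega
      rw [ih _ h1, ih _ h2]

lemma ss_perm : ∀ l : List ℕ, (ss l).Perm l
  | [] => by rw [ss]
  | x :: xs => by
    rw [ss]
    have hm : List.idxOf ((x :: xs).foldr max 0) (x :: xs) < (x :: xs).length :=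
      List.idxOf_lt_length_iff.2 (foldr_max_mem x xs)
    set l := x :: xs with hl
    set i := l.idxOf (l.foldr max 0) with hi
    have key : l.take i ++ (l.foldr max 0) :: l.drop (i + 1) = l :=
      take_indexOf_cons_drop l _ (foldr_max_mem x xs)
    have p1 := ss_perm (l.take i)
    have p2 := ss_perm (l.drop (i + 1))
    apply List.Perm.trans ((p1.append p2).append (List.Perm.refl [l.foldr max 0]))
    conv_rhs => rw [← key]
    rw [List.append_assoc]
    exact List.Perm.append_left _ (List.perm_append_singleton _ _)
  termination_by l => l.length
  decreasing_by
  · simp only [List.length_take]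
    have : List.idxOf ((x :: xs).foldr max 0) (x :: xs) < (x :: xs).length :=
      List.idxOf_lt_length_iff.2 (foldr_max_mem x xs)
    omega
  · simp only [List.length_drop, List.length_cons]
    omega

lemma split_foldl (m : ℕ) : ∀ (s A B : List ℕ), (∀ b ∈ s, b < m) →
    (∀ b ∈ s, (b ∈ A ∧ b ∉ B) ∨ (b ∈ B ∧ b ∉ A)) →
    s.foldl (fun w b => reloc b w) (A ++ m :: B) =
      (s.filter (· ∈ A)).foldl (fun w b => reloc b w) A ++
        m :: (s.filter (· ∈ B)).foldl (fun w b => reloc b w) B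
  | [], A, B, _, _ => by simp
  | b :: s, A, B, hlt, hmem => by
    have hb := hmem b (by simp)
    have hblt := hlt b (by simp)
    rcases hb with ⟨hbA, hbB⟩ | ⟨hbB, hbA⟩
    · have step : reloc b (A ++ m :: B) = reloc b A ++ m :: B := reloc_left b m A B hbA hblt
      have hperm : (reloc b A).Perm A := reloc_perm b A hbA
      have ih := split_foldl m s (reloc b A) B (fun c hc => hlt c (by simp [hc]))
        (fun c hc => by
          rcases hmem c (by simp [hc]) with ⟨h1, h2⟩ | ⟨h1, h2⟩
          · exact Or.inl ⟨hperm.mem_iff.2 h1, h2⟩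
          · exact Or.inr ⟨h1, fun hc' => h2 (hperm.mem_iff.1 hc')⟩)
      have e1 : List.filter (fun x => decide (x ∈ reloc b A)) s
          = List.filter (fun x => decide (x ∈ A)) s :=
        List.filter_congr (fun c _ => by simp [hperm.mem_iff])
      have e2 : List.filter (fun x => decide (x ∈ A)) (b :: s)
          = b :: List.filter (fun x => decide (x ∈ A)) s := by
        rw [List.filter_cons, if_pos (by simpa using hbA)]
      have e3 : List.filter (fun x => decide (x ∈ B)) (b :: s)
          = List.filter (fun x => decide (x ∈ B)) s := by
        rw [List.filter_cons, if_neg (by simpa using hbB)]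
      simp only [List.foldl_cons, step]
      rw [ih, e1, e2, e3]
      simp only [List.foldl_cons]
    · have step : reloc b (A ++ m :: B) = A ++ m :: reloc b B :=
        reloc_right b m A B hbA (Nat.ne_of_lt hblt)
      have hperm : (reloc b B).Perm B := reloc_perm b B hbB
      have ih := split_foldl m s A (reloc b B) (fun c hc => hlt c (by simp [hc]))
        (fun c hc => by
          rcases hmem c (by simp [hc]) with ⟨h1, h2⟩ | ⟨h1, h2⟩
          · exact Or.inl ⟨h1, fun hc' => h2 (hperm.mem_iff.1 hc')⟩
          · exact Or.inr ⟨hperm.mem_iff.2 h1, h2⟩)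
      have e1 : List.filter (fun x => decide (x ∈ reloc b B)) s
          = List.filter (fun x => decide (x ∈ B)) s :=
        List.filter_congr (fun c _ => by simp [hperm.mem_iff])
      have e2 : List.filter (fun x => decide (x ∈ B)) (b :: s)
          = b :: List.filter (fun x => decide (x ∈ B)) s := by
        rw [List.filter_cons, if_pos (by simpa using hbB)]
      have e3 : List.filter (fun x => decide (x ∈ A)) (b :: s)
          = List.filter (fun x => decide (x ∈ A)) s := by
        rw [List.filter_cons, if_neg (by simpa using hbA)]
      simp only [List.foldl_cons, step]
      rw [ih, e1, e2, e3]
      simp only [List.foldl_cons]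

lemma dtopList_eq_of (w t : List ℕ) (hs : List.Pairwise (· ≤ ·) t)
    (hp : t.Perm (dtopsAux w)) : dtopList w = t := by
  have h1 : dtopList w = (dtopsAux w).mergeSort (fun a b => decide (a ≤ b)) := by
    rw [dtopList, pre_eq]
  have h2 : ((dtopsAux w).mergeSort (fun a b => decide (a ≤ b))).Perm t :=
    ((List.mergeSort_perm _ _).trans hp.symm)
  have h3 : List.Pairwise (· ≤ ·) ((dtopsAux w).mergeSort (fun a b => decide (a ≤ b))) := by
    have := List.pairwise_mergeSort (le := fun a b : ℕ => decide (a ≤ b))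
      (fun a b c hab hbc => by simp at *; omega)
      (fun a b => by simp [Nat.le_total]) (dtopsAux w)
    exact this.imp (fun h => by simpa using h)
  rw [h1]
  exact List.Perm.eq_of_pairwise (fun a b _ _ h1 h2 => le_antisymm h1 h2) h3 hs h2

lemma main_lemma : ∀ (n : ℕ) (l : List ℕ), l.length ≤ n → l.Nodup →
    (dtopList l).foldl (fun w b => reloc b w) l = ss l := by
  intro n
  induction n using Nat.strong_induction_on with
  | _ n ih =>
    intro l hlen hnd
    cases l with
    | nil => simp [dtopList, ss]
    | cons x xs =>
      set m := (x :: xs).foldr max 0 with hm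
      set i := (x :: xs).idxOf m with hi
      set L := (x :: xs).take i with hL
      set R := (x :: xs).drop (i + 1) with hR
      have hmem : m ∈ x :: xs := foldr_max_mem x xs
      have hilt : i < (x :: xs).length := List.idxOf_lt_length_iff.2 hmem
      have hsplit : L ++ m :: R = x :: xs := take_indexOf_cons_drop _ _ hmem
      have hnd' : (L ++ m :: R).Nodup := by rw [hsplit]; exact hnd
      rw [List.nodup_append] at hnd'
      obtain ⟨hNL, hNmR, hdisj⟩ := hnd'
      have hmL : m ∉ L := fun hc => hdisj m hc m (by simp) rfl
      have hNR : R.Nodup := hNmR.of_cons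
      have hmR : m ∉ R := by
        have := List.nodup_cons.1 hNmR
        exact this.1
      have hLsub : ∀ y ∈ L, y ∈ x :: xs := fun y hy => (List.take_sublist _ _).subset hy
      have hRsub : ∀ y ∈ R, y ∈ x :: xs := fun y hy => (List.drop_sublist _ _).subset hy
      have hLm : ∀ y ∈ L, y < m := fun y hy =>
        lt_of_le_of_ne (le_foldr_max _ y (hLsub y hy)) (fun h => hmL (h ▸ hy))
      have hRm : ∀ y ∈ R, y < m := fun y hy =>
        lt_of_le_of_ne (le_foldr_max _ y (hRsub y hy)) (fun h => hmR (h ▸ hy))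
      have hLR : ∀ y ∈ L, y ∉ R := fun y hy hc => hdisj y hy y (by simp [hc]) rfl
      have hdt : dtopsAux (x :: xs) =
          dtopsAux L ++ (if R.isEmpty then [] else [m]) ++ dtopsAux R := by
        rw [← hsplit]; exact dtopsAux_split m L R hLm hRm
      set t0 := (dtopsAux L ++ dtopsAux R).mergeSort (fun a b => decide (a ≤ b)) with ht0
      have ht0p : t0.Perm (dtopsAux L ++ dtopsAux R) := List.mergeSort_perm _ _
      have ht0s : List.Pairwise (· ≤ ·) t0 := by
        have := List.pairwise_mergeSort (le := fun a b : ℕ => decide (a ≤ b))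
          (fun a b c hab hbc => by simp at *; omega)
          (fun a b => by simp [Nat.le_total]) (dtopsAux L ++ dtopsAux R)
        exact this.imp (fun h => by simpa using h)
      have ht0mem : ∀ b ∈ t0, (b ∈ L ∧ b ∉ R) ∨ (b ∈ R ∧ b ∉ L) := by
        intro b hb
        rcases List.mem_append.1 (ht0p.subset hb) with h | h
        · have hbL := (dtopsAux_sublist L).subset h
          exact Or.inl ⟨hbL, hLR b hbL⟩
        · have hbR := (dtopsAux_sublist R).subset h
          exact Or.inr ⟨hbR, fun hc => hLR b hc hbR⟩
      have ht0lt : ∀ b ∈ t0, b < m := by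
        intro b hb
        rcases ht0mem b hb with ⟨h, _⟩ | ⟨h, _⟩
        exacts [hLm b h, hRm b h]
      -- filters
      have hfL : List.filter (fun c => decide (c ∈ L)) t0 = dtopList L := by
        symm
        apply dtopList_eq_of
        · exact ht0s.filter _
        · refine (ht0p.filter _).trans ?_
          rw [List.filter_append]
          rw [List.filter_eq_self.2 (fun a ha => by
            simpa using (dtopsAux_sublist L).subset ha)]
          rw [List.filter_eq_nil_iff.2 (fun a ha => by
            simpa using fun hc => hLR a hc ((dtopsAux_sublist R).subset ha))]
          simp
      have hfR : List.filter (fun c => decide (c ∈ R)) t0 = dtopList R := by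
        symm
        apply dtopList_eq_of
        · exact ht0s.filter _
        · refine (ht0p.filter _).trans ?_
          rw [List.filter_append]
          rw [List.filter_eq_nil_iff.2 (fun a ha => by
            simpa using fun hc => hLR a ((dtopsAux_sublist L).subset ha) hc)]
          rw [List.filter_eq_self.2 (fun a ha => by
            simpa using (dtopsAux_sublist R).subset ha)]
          simp
      have hnpos : 0 < n := lt_of_lt_of_le (by simp) hlen
      have hLlen : L.length ≤ n - 1 := by
        simp only [hL, List.length_take]
        simp only [List.length_cons] at hilt hlen ⊢
        omega
      have hRlen : R.length ≤ n - 1 := by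
        simp only [hR, List.length_drop]
        simp only [List.length_cons] at hilt hlen ⊢
        omega
      have ihL := ih (n - 1) (by omega) L hLlen hNL
      have ihR := ih (n - 1) (by omega) R hRlen hNR
      have hsplitf := split_foldl m t0 L R ht0lt ht0mem
      rw [hsplit, hfL, hfR, ihL, ihR] at hsplitf
      -- compute ss (x :: xs)
      have hssl : ss (x :: xs) = ss L ++ ss R ++ [m] := by
        rw [ss]
      by_cases hRe : R = []
      · have hdl : dtopList (x :: xs) = t0 := by
          apply dtopList_eq_of
          · exact ht0s
          · have hp' := ht0p
            rw [hRe] at hp'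
            rw [hdt, hRe]
            simpa [dtopsAux] using hp'
        rw [hdl, hsplitf, hssl, hRe]
        simp [ss]
      · have hdl : dtopList (x :: xs) = t0 ++ [m] := by
          apply dtopList_eq_of
          · rw [List.pairwise_append]
            exact ⟨ht0s, List.pairwise_singleton _ _,
              fun a ha b hb => by
                rw [List.mem_singleton] at hb
                exact hb ▸ le_of_lt (ht0lt a ha)⟩
          · rw [hdt, if_neg (by simpa using hRe)]
            refine (ht0p.append_right [m]).trans ?_
            rw [List.append_assoc, List.append_assoc]
            exact List.Perm.append_left _
              ((List.perm_append_singleton m (dtopsAux R)).trans (List.Perm.refl _))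
        rw [hdl, List.foldl_append, hsplitf]
        simp only [List.foldl_cons, List.foldl_nil]
        rw [reloc_max m (ss L) (ss R)
          (fun hc => hmL ((ss_perm L).mem_iff.1 hc))
          (fun y hy => hRm y ((ss_perm R).mem_iff.1 hy)), hssl]

/-- The dynamic description of stack-sorting agrees with the recursive one: relocating
the descent tops in increasing order yields `S(π)`. -/
theorem stmt15 (n : ℕ) (π : Equiv.Perm (Fin n)) :
    (dtopList (word π)).foldl (fun w b => reloc b w) (word π) = stackSort (word π) := by
  have hnd : (word π).Nodup := by
    rw [word, List.nodup_ofFn]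
    intro i j hij
    simp only [Nat.add_right_cancel_iff] at hij
    exact π.injective (Fin.ext hij)
  rw [stackSort, ssFuel_eq_ss _ _ le_rfl]
  exact main_lemma (word π).length (word π) le_rfl hnd

end
end

section
/- Let t ≥ 1 and let π be a 213-avoiding permutation of [n]. Then π avoids the increasing pattern 12⋯(t+2) if and only if lrp(λ(π)) ≤ t, where lrp(T) is the maximum number of right edges in any path of the binary tree T = λ(π). -/
open scoped Classical
noncomputable section

/-! ### Auxiliary development -/

lemma foldr_min_le (x : ℕ) (xs : List ℕ) : ∀ a ∈ x :: xs, xs.foldr min x ≤ a := by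
  induction xs generalizing x with
  | nil => simp
  | cons y ys ih =>
    intro a ha
    simp only [List.mem_cons] at ha
    simp only [List.foldr_cons]
    rcases ha with rfl | rfl | hmem
    · exact le_trans (min_le_right _ _) (ih a a (by simp))
    · exact min_le_left _ _
    · exact le_trans (min_le_right _ _) (ih x a (by simp [hmem]))

lemma foldr_min_mem (x : ℕ) (xs : List ℕ) : xs.foldr min x ∈ x :: xs := by
  induction xs generalizing x with
  | nil => simp
  | cons y ys ih =>
    simp only [List.foldr_cons]
    rcases le_total y (ys.foldr min x) with hle | hle
    · simp [min_eq_left hle]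
    · rw [min_eq_right hle]
      rcases List.mem_cons.1 (ih x) with h' | h' <;> simp [h']

lemma lamFuel_congr : ∀ (f g : ℕ) (l : List ℕ), l.length ≤ f → l.length ≤ g →
    lamFuel f l = lamFuel g l := by
  intro f
  induction f with
  | zero =>
    intro g l hf _
    have : l = [] := List.length_eq_zero_iff.1 (Nat.le_zero.1 hf)
    subst this; cases g <;> rfl
  | succ f ih =>
    intro g l hf hg
    match l, g with
    | [], g => cases g <;> rfl
    | x :: xs, 0 => simp at hg
    | x :: xs, g + 1 =>
      have hm : (xs.foldr min x) ∈ x :: xs := foldr_min_mem x xs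
      have hi : (x :: xs).idxOf (xs.foldr min x) < (x :: xs).length :=
        List.idxOf_lt_length_iff.2 hm
      simp only [List.length_cons] at hf hg hi
      simp only [lamFuel]
      congr 1
      · apply ih <;> simp [List.length_take] <;> omega
      · apply ih <;> simp [List.length_drop] <;> omega

lemma lam_cons (x : ℕ) (xs : List ℕ) :
    lam (x :: xs) = .node (lam ((x :: xs).take ((x :: xs).idxOf (xs.foldr min x))))
      (xs.foldr min x) (lam ((x :: xs).drop ((x :: xs).idxOf (xs.foldr min x) + 1))) := by
  have hm : (xs.foldr min x) ∈ x :: xs := foldr_min_mem x xs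
  have hi : (x :: xs).idxOf (xs.foldr min x) < (x :: xs).length :=
    List.idxOf_lt_length_iff.2 hm
  simp only [List.length_cons] at hi
  show lamFuel (x :: xs).length (x :: xs) = _
  simp only [List.length_cons, lamFuel]
  unfold lam
  congr 1
  · apply lamFuel_congr <;> simp [List.length_take] <;> omega
  · apply lamFuel_congr <;> simp [List.length_drop]

lemma lam_ne_leaf (x : ℕ) (xs : List ℕ) : lam (x :: xs) ≠ BT.leaf := by
  rw [lam_cons]; exact fun h => by cases h

/-- Decomposition of `lam` on a nonempty list. -/
lemma lam_decomp (x : ℕ) (xs : List ℕ) :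
    ∃ σ m τ, x :: xs = σ ++ m :: τ ∧ lam (x :: xs) = .node (lam σ) m (lam τ) ∧
      σ.length < (x :: xs).length ∧ τ.length < (x :: xs).length ∧
      ∀ a ∈ x :: xs, m ≤ a := by
  have hm : (xs.foldr min x) ∈ x :: xs := foldr_min_mem x xs
  have hi : (x :: xs).idxOf (xs.foldr min x) < (x :: xs).length :=
    List.idxOf_lt_length_iff.2 hm
  refine ⟨(x :: xs).take ((x :: xs).idxOf (xs.foldr min x)), xs.foldr min x,
    (x :: xs).drop ((x :: xs).idxOf (xs.foldr min x) + 1), ?_, lam_cons x xs, ?_, ?_,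
    foldr_min_le x xs⟩
  · conv_lhs => rw [← List.take_append_drop ((x :: xs).idxOf (xs.foldr min x)) (x :: xs)]
    congr 1
    rw [List.drop_eq_getElem_cons hi]
    congr 1
    exact List.getElem_idxOf hi
  · simp only [List.length_take]; omega
  · simp only [List.length_drop]; omega

/-- `w` has no (one-line-notation) occurrence of the pattern 213. -/
def NoPat (w : List ℕ) : Prop := ¬ ∃ a b c : ℕ, [a, b, c].Sublist w ∧ b < a ∧ a < c

lemma NoPat.sublist {s w : List ℕ} (hs : s.Sublist w) (h : NoPat w) : NoPat s := by
  rintro ⟨a, b, c, hsub, h1, h2⟩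
  exact h ⟨a, b, c, hsub.trans hs, h1, h2⟩

lemma rany_node (l : BT) (z : ℕ) (r : BT) :
    rany (BT.node l z r) = max (rstart (BT.node l z r)) (max (rany l) (rany r)) := rfl

/-- Main structural lemma, by strong induction on the length. -/
lemma main_lemma_s17 : ∀ N (w : List ℕ), w.length ≤ N → w.Nodup → NoPat w →
    rany (lam w) = rstart (lam w) ∧
    (∀ s : List ℕ, s.Sublist w → s.Pairwise (· < ·) → s.length ≤ rstart (lam w) + 1) ∧
    (w ≠ [] → ∃ s : List ℕ, s.Sublist w ∧ s.Pairwise (· < ·) ∧ s.length = rstart (lam w) + 1) := by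
  intro N
  induction N with
  | zero =>
    intro w hw _ _
    have hwe : w = [] := List.length_eq_zero_iff.1 (Nat.le_zero.1 hw)
    subst hwe
    refine ⟨rfl, ?_, by simp⟩
    intro s hs _
    rw [List.sublist_nil.1 hs]
    simp
  | succ N ih =>
    intro w hw hnd hnp
    match w with
    | [] =>
      refine ⟨rfl, ?_, by simp⟩
      intro s hs _
      rw [List.sublist_nil.1 hs]
      simp
    | x :: xs =>
      obtain ⟨σ, m, τ, hsp, hlam, hlσ, hlτ, hmin⟩ := lam_decomp x xs
      have hσsub : σ.Sublist (x :: xs) := by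
        rw [hsp]; exact List.sublist_append_left σ (m :: τ)
      have hmτsub : (m :: τ).Sublist (x :: xs) := by
        rw [hsp]; exact List.sublist_append_right σ (m :: τ)
      have hτsub : τ.Sublist (x :: xs) := (List.sublist_cons_self m τ).trans hmτsub
      have hndm : (m :: (σ ++ τ)).Nodup := List.nodup_middle.1 (hsp ▸ hnd)
      have hmσ : m ∉ σ := fun hm => (List.nodup_cons.1 hndm).1 (List.mem_append_left τ hm)
      have hmτ : m ∉ τ := fun hm => (List.nodup_cons.1 hndm).1 (List.mem_append_right σ hm)
      have hmltσ : ∀ a ∈ σ, m < a := fun a ha =>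
        lt_of_le_of_ne (hmin a (hσsub.subset ha)) (fun he => hmσ (he ▸ ha))
      have hmltτ : ∀ a ∈ τ, m < a := fun a ha =>
        lt_of_le_of_ne (hmin a (hτsub.subset ha)) (fun he => hmτ (he ▸ ha))
      have hcross : ∀ a ∈ σ, ∀ b ∈ τ, ¬ a < b := by
        intro a ha b hb hab
        refine hnp ⟨a, m, b, ?_, hmltσ a ha, hab⟩
        rw [hsp]
        exact (List.singleton_sublist.2 ha).append ((List.singleton_sublist.2 hb).cons₂ m)
      have hσlen : σ.length ≤ N := by
        simp only [List.length_cons] at hw hlσ; omega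
      have hτlen : τ.length ≤ N := by
        simp only [List.length_cons] at hw hlτ; omega
      obtain ⟨Cσ, UBσ, EXσ⟩ := ih σ hσlen (hσsub.nodup hnd) (hnp.sublist hσsub)
      obtain ⟨Cτ, UBτ, EXτ⟩ := ih τ hτlen (hτsub.nodup hnd) (hnp.sublist hτsub)
      cases τ with
      | nil =>
        have hre : rstart (lam (x :: xs)) = rstart (lam σ) := by
          rw [hlam]; rfl
        refine ⟨?_, ?_, ?_⟩
        · have h0 : rany (lam ([] : List ℕ)) = 0 := rfl
          rw [hlam, rany_node, ← hlam, h0, Cσ, hre]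
          omega
        · intro s hs hsort
          have hsort' : s.Pairwise (· < ·) := hsort
          rw [hsp] at hs
          rw [hre]
          obtain ⟨s1, s2, rfl, hs1, hs2⟩ := List.sublist_append_iff.1 hs
          rcases List.sublist_cons_iff.1 hs2 with h2 | ⟨r, rfl, hr⟩
          · obtain rfl := List.sublist_nil.1 h2
            have := UBσ s1 hs1 (by simpa using hsort)
            simp only [List.append_nil] at *
            omega
          · obtain rfl := List.sublist_nil.1 hr
            cases s1 with
            | nil => simp
            | cons a as =>
              exfalso
              have hcr := (List.pairwise_append.1 hsort').2.2 a (by simp) m (by simp)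
              exact absurd hcr (not_lt.2 (le_of_lt (hmltσ a (hs1.subset (by simp)))))
        · intro _
          by_cases hσe : σ = []
          · subst hσe
            refine ⟨[m], ?_, by simp, ?_⟩
            · rw [hsp]; simp
            · rw [hre]
              rfl
          · obtain ⟨s, h1, h2, h3⟩ := EXσ hσe
            exact ⟨s, h1.trans hσsub, h2, by rw [hre]; exact h3⟩
      | cons y ys =>
        obtain ⟨A, b, B, hAB⟩ : ∃ A b B, lam (y :: ys) = BT.node A b B := by
          cases h' : lam (y :: ys) with
          | leaf => exact absurd h' (lam_ne_leaf y ys)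
          | node A b B => exact ⟨A, b, B, rfl⟩
        have hre : rstart (lam (x :: xs)) =
            max (rstart (lam σ)) (1 + rstart (lam (y :: ys))) := by
          rw [hlam, hAB]; rfl
        refine ⟨?_, ?_, ?_⟩
        · rw [hlam, rany_node, ← hlam, Cσ, Cτ, hre]
          omega
        · intro s hs hsort
          have hsort' : s.Pairwise (· < ·) := hsort
          rw [hsp] at hs
          obtain ⟨s1, s2, rfl, hs1, hs2⟩ := List.sublist_append_iff.1 hs
          rcases List.sublist_cons_iff.1 hs2 with h2 | ⟨r, rfl, hr⟩
          · cases s1 with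
            | nil =>
              have := UBτ s2 h2 (by simpa using hsort)
              simp only [List.nil_append]
              rw [hre]; omega
            | cons a as =>
              cases s2 with
              | nil =>
                have := UBσ (a :: as) hs1 (by simpa using hsort)
                rw [hre]
                simp only [List.append_nil] at this ⊢
                omega
              | cons c cs =>
                exfalso
                have hcr := (List.pairwise_append.1 hsort').2.2 a (by simp) c (by simp)
                exact hcross a (hs1.subset (by simp)) c (h2.subset (by simp)) hcr
          · cases s1 with
            | nil =>
              have hrs : r.Pairwise (· < ·) := by
                have hmr : (m :: r).Pairwise (· < ·) := by simpa using hsort'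
                exact hmr.of_cons
              have := UBτ r hr hrs
              simp only [List.nil_append, List.length_cons]
              rw [hre]; omega
            | cons a as =>
              exfalso
              have hcr := (List.pairwise_append.1 hsort').2.2 a (by simp) m (by simp)
              exact absurd hcr (not_lt.2 (le_of_lt (hmltσ a (hs1.subset (by simp)))))
        · intro _
          rcases le_or_gt (1 + rstart (lam (y :: ys))) (rstart (lam σ)) with hc | hc
          · have hσe : σ ≠ [] := by
              intro he; rw [he] at hc
              have h0 : rstart (lam ([] : List ℕ)) = 0 := rfl
              rw [h0] at hc; omega
            obtain ⟨s, h1, h2, h3⟩ := EXσ hσe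
            exact ⟨s, h1.trans hσsub, h2, by rw [hre]; omega⟩
          · obtain ⟨s, h1, h2, h3⟩ := EXτ (by simp)
            refine ⟨m :: s, (h1.cons₂ m).trans hmτsub, ?_, ?_⟩
            · rw [List.pairwise_cons]
              exact ⟨fun c hc' => hmltτ c (h1.subset hc'), h2⟩
            · simp only [List.length_cons]; rw [hre]; omega

lemma word_length {n : ℕ} (π : Equiv.Perm (Fin n)) : (word π).length = n := by
  simp [word]

lemma word_get {n : ℕ} (π : Equiv.Perm (Fin n)) (j : Fin (word π).length) :
    (word π).get j = (π (Fin.cast (word_length π) j) : ℕ) + 1 := by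
  exact List.get_ofFn (fun i => (π i : ℕ) + 1) j

lemma p213_iff (g : Fin 3 → ℕ) (h0 : g 1 < g 0) (h1 : g 0 < g 2) (u v : Fin 3) :
    p213 u < p213 v ↔ g u < g v := by
  fin_cases u <;> fin_cases v <;>
    simp [p213, Fin.lt_def, Equiv.swap_apply_of_ne_of_ne] <;> omega

lemma noPat_word {n : ℕ} (π : Equiv.Perm (Fin n)) (h : Avoids π p213) : NoPat (word π) := by
  rintro ⟨a, b, c, hsub, hba, hac⟩
  obtain ⟨F, hF⟩ := List.sublist_iff_exists_fin_orderEmbedding_get_eq.mp hsub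
  set f : Fin 3 → Fin n := fun i => Fin.cast (word_length π) (F i) with hfdef
  have ha : a = (π (f 0) : ℕ) + 1 := by
    have h' := hF ⟨0, by norm_num⟩
    rw [word_get] at h'
    exact h'
  have hb : b = (π (f 1) : ℕ) + 1 := by
    have h' := hF ⟨1, by norm_num⟩
    rw [word_get] at h'
    exact h'
  have hc : c = (π (f 2) : ℕ) + 1 := by
    have h' := hF ⟨2, by norm_num⟩
    rw [word_get] at h'
    exact h'
  apply h
  refine ⟨f, ?_, ?_⟩
  · intro u v huv
    exact F.strictMono huv
  · intro u v
    exact p213_iff (fun i => (π (f i) : ℕ))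
      (show (π (f 1) : ℕ) < (π (f 0) : ℕ) by omega)
      (show (π (f 0) : ℕ) < (π (f 2) : ℕ) by omega) u v

lemma avoids_one_iff {n k : ℕ} (π : Equiv.Perm (Fin n)) :
    Avoids π (1 : Equiv.Perm (Fin k)) ↔
      ¬ ∃ s : List ℕ, s.Sublist (word π) ∧ s.Pairwise (· < ·) ∧ s.length = k := by
  unfold Avoids
  apply not_congr
  constructor
  · rintro ⟨f, hf, hiff⟩
    have hmono : StrictMono fun i : Fin k => π (f i) := by
      intro u v huv
      exact (hiff u v).1 huv
    refine ⟨List.ofFn (fun i : Fin k => (π (f i) : ℕ) + 1), ?_, ?_, by simp⟩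
    · rw [List.sublist_iff_exists_fin_orderEmbedding_get_eq]
      refine ⟨OrderEmbedding.ofStrictMono
        (fun ix => Fin.cast (word_length π).symm (f (Fin.cast (by simp) ix)))
        (fun u v huv => hf huv), ?_⟩
      intro ix
      rw [List.get_ofFn, word_get]
      rfl
    · refine List.pairwise_ofFn.2 ?_
      intro i j hij
      have h' : (π (f i)).val < (π (f j)).val := hmono hij
      omega
  · rintro ⟨s, hsub, hsort, hlen⟩
    obtain ⟨F, hF⟩ := List.sublist_iff_exists_fin_orderEmbedding_get_eq.mp hsub
    set f : Fin k → Fin n := fun a => Fin.cast (word_length π) (F (Fin.cast hlen.symm a))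
      with hfdef
    have hkey : ∀ a : Fin k, s.get (Fin.cast hlen.symm a) = (π (f a) : ℕ) + 1 := by
      intro a; rw [hF, word_get]
    have hs2 : StrictMono fun a : Fin k => π (f a) := by
      intro u v huv
      have h3 := hsort.sortedLT.strictMono_get
        (show Fin.cast hlen.symm u < Fin.cast hlen.symm v from huv)
      rw [hkey u, hkey v] at h3
      exact (show (π (f u)).val < (π (f v)).val by omega)
    refine ⟨f, fun u v huv => F.strictMono huv, ?_⟩
    intro u v
    exact (hs2.lt_iff_lt).symm

/-- A 213-avoiding `π` avoids the increasing pattern `12⋯(t+2)` iff `lrp(λ(π)) ≤ t`. -/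
theorem stmt17 (n t : ℕ) (ht : 1 ≤ t) (π : Equiv.Perm (Fin n)) (h : Avoids π p213) :
    Avoids π (1 : Equiv.Perm (Fin (t + 2))) ↔ rany (lam (word π)) ≤ t := by
  have hnp := noPat_word π h
  have hnd : (word π).Nodup := by
    rw [word]
    exact List.nodup_ofFn.2 fun a b hab => π.injective (Fin.val_injective (by omega))
  obtain ⟨hC, hUB, hEX⟩ := main_lemma_s17 (word π).length (word π) le_rfl hnd hnp
  rw [avoids_one_iff, hC]
  constructor
  · intro hno
    by_contra hlt
    push_neg at hlt
    have hne : word π ≠ [] := by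
      intro h0
      rw [h0] at hlt
      have h1 : rstart (lam ([] : List ℕ)) = 0 := rfl
      omega
    obtain ⟨s, h1, h2, h3⟩ := hEX hne
    refine hno ⟨s.take (t + 2), (List.take_sublist _ _).trans h1,
      List.Pairwise.sublist (List.take_sublist _ _) h2, ?_⟩
    simp only [List.length_take]
    omega
  · rintro hle ⟨s, h1, h2, h3⟩
    have := hUB s h1 h2
    omega

end
end
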